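/- arXiv:1511.09425 — 7 statements merged into one kernel-verified Lean document; each statement's English description precedes it below -/
import Mathlib

section
/- For all real numbers y ≥ x > 0, K ≥ 0, natural number k, and α > 0, there exists a polynomial P with nonnegative coefficients depending only on α and k such that x^α · (ln₊(K/x))^k ≤ y^α · P(ln₊(K/y)). -/
/-- The positive part of the logarithm: `ln₊ x = max (ln x) 0`. -/
noncomputable def lnp (x : ℝ) : ℝ := max (Real.log x) 0

lemma pow_le_exp_aux (α : ℝ) (hα : 0 < α) (k : ℕ) {t : ℝ} (ht : 0 ≤ t) :
    t ^ k ≤ k.factorial / α ^ k * Real.exp (α * t) := by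
  have h1 : (α * t) ^ k / k.factorial ≤ Real.exp (α * t) := by
    calc (α * t) ^ k / k.factorial
        ≤ ∑ i ∈ Finset.range (k + 1), (α * t) ^ i / i.factorial := by
          exact Finset.single_le_sum (f := fun i => (α * t) ^ i / i.factorial)
            (fun i _ => by positivity) (Finset.self_mem_range_succ k)
      _ ≤ Real.exp (α * t) := Real.sum_le_exp_of_nonneg (by positivity) _
  have hαk : (0:ℝ) < α ^ k := by positivity
  rw [mul_pow] at h1
  rw [div_mul_eq_mul_div, le_div_iff₀ hαk]
  calc t ^ k * α ^ k = α ^ k * t ^ k := by ring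
    _ ≤ k.factorial * Real.exp (α * t) := by
        rw [div_le_iff₀ (by positivity : (0:ℝ) < (k.factorial : ℝ))] at h1
        linarith [h1]

lemma one_add_pow_le (α : ℝ) (hα : 0 < α) (k : ℕ) {t : ℝ} (ht : 0 ≤ t) :
    (1 + t) ^ k ≤ 2 ^ k * (1 + k.factorial / α ^ k) * Real.exp (α * t) := by
  have hexp : (1:ℝ) ≤ Real.exp (α * t) := Real.one_le_exp (by positivity)
  have htk := pow_le_exp_aux α hα k ht
  have hfac : (0:ℝ) ≤ (k.factorial : ℝ) / α ^ k := by positivity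
  have h1 : (1 + t) ^ k ≤ 2 ^ k * (1 + t ^ k) := by
    have hm : (1 + t) ≤ 2 * max 1 t := by
      rcases le_total t 1 with h | h
      · calc 1 + t ≤ 1 + 1 := by linarith
          _ ≤ 2 * max 1 t := by rw [max_eq_left h]; norm_num
      · calc 1 + t ≤ t + t := by linarith
          _ = 2 * max 1 t := by rw [max_eq_right h]; ring
    calc (1 + t) ^ k ≤ (2 * max 1 t) ^ k :=
          pow_le_pow_left₀ (by linarith) hm k
      _ = 2 ^ k * (max 1 t) ^ k := mul_pow 2 _ k
      _ ≤ 2 ^ k * (1 + t ^ k) := by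
          gcongr
          rcases le_total t 1 with h | h
          · rw [max_eq_left h]
            have : t ^ k ≥ 0 := by positivity
            simpa using by linarith
          · rw [max_eq_right h]
            have : (1:ℝ) ≥ 0 := by norm_num
            nlinarith [pow_nonneg ht k]
  calc (1 + t) ^ k ≤ 2 ^ k * (1 + t ^ k) := h1
    _ ≤ 2 ^ k * (Real.exp (α * t) + k.factorial / α ^ k * Real.exp (α * t)) := by
        gcongr
    _ = 2 ^ k * (1 + k.factorial / α ^ k) * Real.exp (α * t) := by ring

lemma lnp_nonneg (x : ℝ) : 0 ≤ lnp x := le_max_right _ _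

lemma lnp_div_le (x y K : ℝ) (hx : 0 < x) (hxy : x ≤ y) (hK : 0 ≤ K) :
    lnp (K / x) ≤ lnp (K / y) + Real.log (y / x) := by
  have hy : 0 < y := lt_of_lt_of_le hx hxy
  have hlog : 0 ≤ Real.log (y / x) := Real.log_nonneg ((one_le_div hx).mpr hxy)
  rcases eq_or_lt_of_le hK with h | hKpos
  · subst h
    simp only [lnp, zero_div, Real.log_zero, max_self]
    have : 0 ≤ max (Real.log (0 / y)) 0 := le_max_right _ _
    linarith
  · have hlogeq : Real.log (K / x) = Real.log (K / y) + Real.log (y / x) := by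
      rw [← Real.log_mul (by positivity) (by positivity)]
      congr 1
      field_simp
    unfold lnp
    rw [hlogeq]
    rcases le_total (Real.log (K / y)) 0 with h | h
    · rw [max_eq_right h]
      exact max_le (by linarith) (by linarith)
    · rw [max_eq_left h]
      exact max_le (by linarith) (by linarith)

/-- Lemma (Estimating logarithms): for all `y ≥ x > 0`, `K ≥ 0`, `k : ℕ` and `α > 0` there is a
polynomial `P` with nonnegative coefficients, depending only on `α` and `k`, such that
`x^α (ln₊(K/x))^k ≤ y^α P(ln₊(K/y))`. -/
theorem rpow_mul_lnp_pow_le (α : ℝ) (hα : 0 < α) (k : ℕ) :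
    ∃ P : Polynomial ℝ, (∀ n, 0 ≤ P.coeff n) ∧
      ∀ x y K : ℝ, 0 < x → x ≤ y → 0 ≤ K →
        x ^ α * (lnp (K / x)) ^ k ≤ y ^ α * P.eval (lnp (K / y)) := by
  set c : ℝ := 2 ^ k * (1 + k.factorial / α ^ k) with hc
  have hc0 : 0 ≤ c := by positivity
  refine ⟨Polynomial.C c * (Polynomial.X + 1) ^ k, ?_, ?_⟩
  · intro n
    rw [Polynomial.coeff_C_mul, Polynomial.coeff_X_add_one_pow]
    positivity
  · intro x y K hx hxy hK
    have hy : 0 < y := lt_of_lt_of_le hx hxy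
    set L := lnp (K / y) with hL
    set t := Real.log (y / x) with htdef
    have ht : 0 ≤ t := Real.log_nonneg ((one_le_div hx).mpr hxy)
    have hL0 : 0 ≤ L := lnp_nonneg _
    have heval : (Polynomial.C c * (Polynomial.X + 1) ^ k).eval L = c * (L + 1) ^ k := by
      simp
    rw [heval]
    have hkey : x ^ α * Real.exp (α * t) = y ^ α := by
      rw [htdef, Real.log_div (ne_of_gt hy) (ne_of_gt hx), mul_sub,
        Real.rpow_def_of_pos hx, ← Real.exp_add, Real.rpow_def_of_pos hy]
      congr 1
      ring
    have h1 : lnp (K / x) ≤ L + t := lnp_div_le x y K hx hxy hK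
    have hxα : (0:ℝ) < x ^ α := Real.rpow_pos_of_pos hx α
    calc x ^ α * (lnp (K / x)) ^ k
        ≤ x ^ α * (L + t) ^ k := by
          gcongr
          exact lnp_nonneg _
      _ ≤ x ^ α * ((L + 1) ^ k * (1 + t) ^ k) := by
          gcongr
          rw [← mul_pow]
          apply pow_le_pow_left₀ (by linarith)
          nlinarith
      _ = (L + 1) ^ k * (x ^ α * (1 + t) ^ k) := by ring
      _ ≤ (L + 1) ^ k * (x ^ α * (c * Real.exp (α * t))) := by
          have hmid : x ^ α * (1 + t) ^ k ≤ x ^ α * (c * Real.exp (α * t)) := by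
            gcongr
            exact one_add_pow_le α hα k ht
          exact mul_le_mul_of_nonneg_left hmid (by positivity)
      _ = y ^ α * (c * (L + 1) ^ k) := by rw [← hkey]; ring
end

section
/- Let m < −1, a₀ > 0, A, K, L ≥ 0 and k, l natural numbers. Then there exists a polynomial P with nonnegative coefficients (depending on m, k, l) such that for all a₁ ≥ a₀, ∫_{a₀}^{a₁} max(A,x)^m · (ln₊(K/x))^k · (ln₊(x/L))^l dx ≤ max(A,a₀)^{m+1} · P(ln₊(max(K,A)/max(a₀, min(A,L))), ln₊(a₀/L)). -/
lemma lnp_zero : lnp 0 = 0 := by simp [lnp]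

lemma lnp_one : lnp 1 = 0 := by simp [lnp]

lemma lnp_mono {u v : ℝ} (hu : 0 ≤ u) (h : u ≤ v) : lnp u ≤ lnp v := by
  rcases hu.eq_or_lt with h0 | h0
  · rw [← h0, lnp_zero]; exact lnp_nonneg v
  · exact max_le_max (Real.log_le_log h0 h) le_rfl

lemma lnp_mul_le {u v : ℝ} (hu : 0 ≤ u) (hv : 0 ≤ v) : lnp (u * v) ≤ lnp u + lnp v := by
  rcases hu.eq_or_lt with h0 | h0
  · rw [← h0, zero_mul, lnp_zero]; simpa using lnp_nonneg v
  rcases hv.eq_or_lt with h1 | h1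
  · rw [← h1, mul_zero, lnp_zero]; simpa using lnp_nonneg u
  · refine max_le ?_ (add_nonneg (lnp_nonneg _) (lnp_nonneg _))
    rw [Real.log_mul h0.ne' h1.ne']
    exact add_le_add (le_max_left _ _) (le_max_left _ _)

lemma lnp_le_log {u : ℝ} (hu : 1 ≤ u) : lnp u ≤ Real.log u :=
  max_le le_rfl (Real.log_nonneg hu)

lemma lnp_le_of_le_max_one {u v : ℝ} (hu : 0 ≤ u) (h : u ≤ max v 1) : lnp u ≤ lnp v := by
  rcases le_total v 1 with hv | hv
  · rw [max_eq_right hv] at h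
    calc lnp u ≤ lnp 1 := lnp_mono hu h
    _ = 0 := lnp_one
    _ ≤ lnp v := lnp_nonneg v
  · rw [max_eq_left hv] at h
    exact lnp_mono hu h

lemma one_add_log_pow_le {t c : ℝ} (n : ℕ) (hc : 0 < c) (ht : 1 ≤ t) :
    (1 + Real.log t) ^ n ≤ (1 + n / c) ^ n * t ^ c := by
  have ht0 : (0:ℝ) < t := lt_of_lt_of_le one_pos ht
  rcases Nat.eq_zero_or_pos n with hn | hn
  · subst hn
    simpa using Real.one_le_rpow ht hc.le
  · have hn0 : (0:ℝ) < (n:ℝ) := by exact_mod_cast hn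
    have hu1 : (1:ℝ) ≤ t ^ (c / n) := Real.one_le_rpow ht (by positivity)
    have hu0 : (0:ℝ) < t ^ (c / n) := lt_of_lt_of_le one_pos hu1
    have hkey : 1 + Real.log t ≤ (1 + n / c) * t ^ (c / n) := by
      have hlog : Real.log (t ^ (c / n)) ≤ t ^ (c / n) - 1 := Real.log_le_sub_one_of_pos hu0
      have hlr : Real.log (t ^ (c / n)) = (c / n) * Real.log t := Real.log_rpow ht0 _
      have hnc : (0:ℝ) < (n:ℝ) / c := by positivity
      have : Real.log t = ((n:ℝ) / c) * Real.log (t ^ (c / n)) := by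
        rw [hlr]; field_simp
      rw [this]
      nlinarith [hu1, hnc]
    calc (1 + Real.log t) ^ n ≤ ((1 + n / c) * t ^ (c / n)) ^ n := by
          apply pow_le_pow_left₀ _ hkey
          have := Real.log_nonneg ht
          linarith
      _ = (1 + n / c) ^ n * (t ^ (c / n)) ^ n := mul_pow _ _ _
      _ = (1 + n / c) ^ n * t ^ c := by
          rw [← Real.rpow_natCast (t ^ (c / n)) n, ← Real.rpow_mul ht0.le,
            div_mul_cancel₀ _ hn0.ne']

lemma mvp_coeff_nonneg_mul {p q : MvPolynomial (Fin 2) ℝ} (hp : ∀ d, 0 ≤ p.coeff d)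
    (hq : ∀ d, 0 ≤ q.coeff d) : ∀ d, 0 ≤ (p * q).coeff d := by
  intro d
  rw [MvPolynomial.coeff_mul]
  exact Finset.sum_nonneg fun x _ => mul_nonneg (hp _) (hq _)

lemma mvp_coeff_nonneg_base : ∀ d, 0 ≤ ((1 + MvPolynomial.X 0 + MvPolynomial.X 1 :
    MvPolynomial (Fin 2) ℝ)).coeff d := by
  intro d
  rw [MvPolynomial.coeff_add, MvPolynomial.coeff_add, MvPolynomial.coeff_one,
    MvPolynomial.coeff_X', MvPolynomial.coeff_X']
  split_ifs <;> norm_num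

lemma mvp_coeff_nonneg_pow (n : ℕ) : ∀ d, 0 ≤ (((1 + MvPolynomial.X 0 + MvPolynomial.X 1 :
    MvPolynomial (Fin 2) ℝ)) ^ n).coeff d := by
  induction n with
  | zero =>
      intro d
      rw [pow_zero, MvPolynomial.coeff_one]
      split_ifs <;> norm_num
  | succ n ih =>
      rw [pow_succ]
      exact mvp_coeff_nonneg_mul ih mvp_coeff_nonneg_base

set_option maxHeartbeats 2000000 in
/-- Lemma (Λ integration): for `m < −1`, `k, l : ℕ`, there is a polynomial `P` in two variables
with nonnegative coefficients (depending on `m, k, l`) such that for all `A, K ≥ 0`, `L > 0`,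
`0 < a₀ ≤ a₁`,
`∫_{a₀}^{a₁} max(A,x)^m (ln₊(K/x))^k (ln₊(x/L))^l dx
  ≤ max(A,a₀)^{m+1} · P(ln₊(max(K,A)/max(a₀, min(A,L))), ln₊(a₀/L))`. -/
theorem lambda_integration (m : ℝ) (hm : m < -1) (k l : ℕ) :
    ∃ P : MvPolynomial (Fin 2) ℝ, (∀ d, 0 ≤ P.coeff d) ∧
      ∀ A K L a₀ a₁ : ℝ, 0 ≤ A → 0 ≤ K → 0 < L → 0 < a₀ → a₀ ≤ a₁ →
        (∫ x in a₀..a₁, (max A x) ^ m * (lnp (K / x)) ^ k * (lnp (x / L)) ^ l)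
          ≤ (max A a₀) ^ (m + 1) *
            MvPolynomial.eval ![lnp (max K A / max a₀ (min A L)), lnp (a₀ / L)] P := by
  have hδ : (0:ℝ) < -(m + 1) / 2 := by linarith
  set δ : ℝ := -(m + 1) / 2 with hδdef
  set Ck : ℝ := (1 + (k:ℝ) / ((1:ℝ)/2)) ^ k with hCkdef
  set Cl : ℝ := (1 + (l:ℝ) / δ) ^ l with hCldef
  have hCk0 : 0 ≤ Ck := by positivity
  have hCl0 : 0 ≤ Cl := by
    rw [hCldef]
    apply pow_nonneg
    have : 0 ≤ (l:ℝ) / δ := div_nonneg (Nat.cast_nonneg l) hδ.le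
    linarith
  set M : ℝ := 2 * Ck + Cl / δ with hMdef
  have hM0 : 0 ≤ M := by
    rw [hMdef]
    have h1 : 0 ≤ Cl / δ := div_nonneg hCl0 hδ.le
    linarith
  clear_value M Cl Ck δ
  refine ⟨MvPolynomial.C M * (1 + MvPolynomial.X 0 + MvPolynomial.X 1) ^ (k + l), ?_, ?_⟩
  · intro d
    rw [MvPolynomial.coeff_C_mul]
    exact mul_nonneg hM0 (mvp_coeff_nonneg_pow (k + l) d)
  intro A K L a₀ a₁ hA hK hL ha₀ ha₁
  set X := lnp (max K A / max a₀ (min A L)) with hXdef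
  set Y := lnp (a₀ / L) with hYdef
  have heval : MvPolynomial.eval ![X, Y]
      ((MvPolynomial.C M * (1 + MvPolynomial.X 0 + MvPolynomial.X 1) ^ (k + l)
        : MvPolynomial (Fin 2) ℝ)) = M * (1 + X + Y) ^ (k + l) := by
    simp
  rw [heval]
  set B := max A a₀ with hBdef
  have hB0 : (0:ℝ) < B := lt_of_lt_of_le ha₀ (le_max_right _ _)
  have ha₀B : a₀ ≤ B := le_max_right _ _
  have hAB : A ≤ B := le_max_left _ _
  have hX0 : 0 ≤ X := lnp_nonneg _
  have hY0 : 0 ≤ Y := lnp_nonneg _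
  set D := max a₀ (min A L) with hDdef
  have hD0 : (0:ℝ) < D := lt_of_lt_of_le ha₀ (le_max_left _ _)
  have hDB : D ≤ B := max_le ha₀B ((min_le_left A L).trans hAB)
  have hKB : lnp (K / B) ≤ X := by
    apply lnp_mono (div_nonneg hK hB0.le)
    exact div_le_div₀ (le_trans hK (le_max_left K A)) (le_max_left K A) hD0 hDB
  have hBD : lnp (B / D) ≤ X := by
    apply lnp_le_of_le_max_one (div_nonneg hB0.le hD0.le)
    rw [hBdef, ← max_div_div_right hD0.le]
    refine max_le_max ((div_le_div_iff_of_pos_right hD0).mpr (le_max_right K A)) ?_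
    rw [div_le_one hD0]
    exact le_max_left _ _
  have hDL : lnp (D / L) ≤ Y := by
    apply lnp_le_of_le_max_one (div_nonneg hD0.le hL.le)
    rw [hDdef, ← max_div_div_right hL.le]
    refine max_le_max le_rfl ?_
    rw [div_le_one hL]
    exact min_le_right A L
  have hBL : lnp (B / L) ≤ X + Y := by
    have hsplit : B / L = (B / D) * (D / L) := (div_mul_div_cancel₀ hD0.ne').symm
    rw [hsplit]
    exact (lnp_mul_le (div_nonneg hB0.le hD0.le) (div_nonneg hD0.le hL.le)).trans
      (add_le_add hBD hDL)
  -- continuity and integrability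
  have hne : ∀ x ∈ Set.Ici a₀, x ≠ 0 := fun x hx => (lt_of_lt_of_le ha₀ hx).ne'
  have hcont : ContinuousOn
      (fun x : ℝ => (max A x) ^ m * lnp (K / x) ^ k * lnp (x / L) ^ l) (Set.Ici a₀) := by
    have c1 : ContinuousOn (fun x : ℝ => (max A x) ^ m) (Set.Ici a₀) := by
      apply ContinuousOn.rpow_const ((continuous_const.max continuous_id).continuousOn)
      intro x hx
      exact Or.inl (lt_of_lt_of_le ha₀ (le_trans hx (le_max_right A x))).ne'
    have c2 : ContinuousOn (fun x : ℝ => lnp (K / x) ^ k) (Set.Ici a₀) := by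
      rcases hK.eq_or_lt with h0 | h0
      · have : (fun x : ℝ => lnp (K / x) ^ k) = fun _ : ℝ => lnp 0 ^ k := by
          funext x; rw [← h0, zero_div]
        rw [this]; exact continuousOn_const
      · apply ContinuousOn.pow
        simp only [lnp]
        apply ContinuousOn.sup _ continuousOn_const
        apply Real.continuousOn_log.comp (continuousOn_const.div continuousOn_id hne)
        intro x hx
        exact Set.mem_compl_singleton_iff.mpr (div_ne_zero h0.ne' (hne x hx))
    have c3 : ContinuousOn (fun x : ℝ => lnp (x / L) ^ l) (Set.Ici a₀) := by
      apply ContinuousOn.pow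
      simp only [lnp]
      apply ContinuousOn.sup _ continuousOn_const
      apply Real.continuousOn_log.comp (continuousOn_id.div_const L)
      intro x hx
      exact Set.mem_compl_singleton_iff.mpr (div_ne_zero (hne x hx) hL.ne')
    exact (c1.mul c2).mul c3
  have hsub : ∀ u v : ℝ, a₀ ≤ u → a₀ ≤ v → Set.uIcc u v ⊆ Set.Ici a₀ := by
    intro u v hu hv x hx
    rcases Set.mem_uIcc.mp hx with ⟨h1, _⟩ | ⟨h1, _⟩
    · exact le_trans hu h1
    · exact le_trans hv h1
  have hint : ∀ u v : ℝ, a₀ ≤ u → a₀ ≤ v → IntervalIntegrable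
      (fun x : ℝ => (max A x) ^ m * lnp (K / x) ^ k * lnp (x / L) ^ l)
      MeasureTheory.volume u v :=
    fun u v hu hv => (hcont.mono (hsub u v hu hv)).intervalIntegrable
  have hrint : ∀ (r : ℝ) (c u v : ℝ), a₀ ≤ u → a₀ ≤ v → IntervalIntegrable
      (fun x : ℝ => c * x ^ r) MeasureTheory.volume u v := by
    intro r c u v hu hv
    apply IntervalIntegrable.const_mul
    apply intervalIntegral.intervalIntegrable_rpow
    right
    exact fun h => (lt_of_lt_of_le ha₀ (hsub u v hu hv h)).ne rfl
  -- first piece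
  have main1 : ∀ c : ℝ, a₀ ≤ c → c ≤ B → c ≤ a₁ →
      (∫ x in a₀..c, (max A x) ^ m * lnp (K / x) ^ k * lnp (x / L) ^ l)
        ≤ (1 + X + Y) ^ (k + l) * Ck * (2 * B ^ (m + 1)) := by
    intro c hc1 hc2 hc3
    have hT0 : (0:ℝ) ≤ (1 + X + Y) ^ (k + l) := by positivity
    have hBhalf : (0:ℝ) ≤ B ^ ((1:ℝ)/2) := Real.rpow_nonneg hB0.le _
    have hBm : (0:ℝ) ≤ B ^ m := Real.rpow_nonneg hB0.le m
    have hptw : ∀ x ∈ Set.Icc a₀ c,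
        (max A x) ^ m * lnp (K / x) ^ k * lnp (x / L) ^ l ≤
        ((1 + X + Y) ^ (k + l) * Ck * (B ^ m * B ^ ((1:ℝ)/2))) * x ^ (-((1:ℝ)/2)) := by
      intro x hx
      have hx0 : (0:ℝ) < x := lt_of_lt_of_le ha₀ hx.1
      have hxB : x ≤ B := hx.2.trans hc2
      have hmax : max A x = B := le_antisymm (max_le hAB hxB) (max_le_max le_rfl hx.1)
      have hBx1 : (1:ℝ) ≤ B / x := (one_le_div hx0).mpr hxB
      have e2 : lnp (x / L) ≤ X + Y := by
        refine (lnp_mono (div_nonneg hx0.le hL.le) ?_).trans hBL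
        gcongr
      have e1 : lnp (K / x) ≤ X + Real.log (B / x) := by
        have hsp : K / x = (K / B) * (B / x) := (div_mul_div_cancel₀ hB0.ne').symm
        rw [hsp]
        exact (lnp_mul_le (div_nonneg hK hB0.le) (div_nonneg hB0.le hx0.le)).trans
          (add_le_add hKB (lnp_le_log hBx1))
      have hlogBx : 0 ≤ Real.log (B / x) := Real.log_nonneg hBx1
      have e1' : lnp (K / x) ^ k ≤ (1 + X + Y) ^ k * (Ck * (B / x) ^ ((1:ℝ)/2)) := by
        calc lnp (K / x) ^ k ≤ ((1 + X + Y) * (1 + Real.log (B / x))) ^ k := by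
              apply pow_le_pow_left₀ (lnp_nonneg _)
              refine e1.trans ?_
              nlinarith
          _ = (1 + X + Y) ^ k * (1 + Real.log (B / x)) ^ k := mul_pow _ _ _
          _ ≤ (1 + X + Y) ^ k * (Ck * (B / x) ^ ((1:ℝ)/2)) := by
              apply mul_le_mul_of_nonneg_left _ (by positivity)
              rw [hCkdef]
              exact one_add_log_pow_le k (by norm_num) hBx1
      have e2' : lnp (x / L) ^ l ≤ (1 + X + Y) ^ l :=
        pow_le_pow_left₀ (lnp_nonneg _) (by linarith) l
      calc (max A x) ^ m * lnp (K / x) ^ k * lnp (x / L) ^ l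
          ≤ B ^ m * ((1 + X + Y) ^ k * (Ck * (B / x) ^ ((1:ℝ)/2))) * (1 + X + Y) ^ l := by
            rw [hmax]
            apply mul_le_mul (mul_le_mul_of_nonneg_left e1' hBm) e2'
              (pow_nonneg (lnp_nonneg _) l)
            have : (0:ℝ) ≤ Ck * (B / x) ^ ((1:ℝ)/2) :=
              mul_nonneg hCk0 (Real.rpow_nonneg (div_nonneg hB0.le hx0.le) _)
            positivity
        _ = ((1 + X + Y) ^ (k + l) * Ck * (B ^ m * B ^ ((1:ℝ)/2))) * x ^ (-((1:ℝ)/2)) := by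
            rw [Real.div_rpow hB0.le hx0.le, Real.rpow_neg hx0.le, pow_add]
            ring
    have h1 : B ^ ((1:ℝ)/2) * B ^ ((1:ℝ)/2) = B := by
      rw [← Real.rpow_add hB0]
      norm_num
    have h2 : B ^ m * B = B ^ (m + 1) := (Real.rpow_add_one hB0.ne' m).symm
    have hkey : B ^ m * B ^ ((1:ℝ)/2) * (2 * B ^ ((1:ℝ)/2)) = 2 * B ^ (m + 1) := by
      have h3 : B ^ m * B ^ ((1:ℝ)/2) * (2 * B ^ ((1:ℝ)/2)) =
          2 * (B ^ m * (B ^ ((1:ℝ)/2) * B ^ ((1:ℝ)/2))) := by ring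
      rw [h3, h1, h2]
    calc (∫ x in a₀..c, (max A x) ^ m * lnp (K / x) ^ k * lnp (x / L) ^ l)
        ≤ ∫ x in a₀..c,
            ((1 + X + Y) ^ (k + l) * Ck * (B ^ m * B ^ ((1:ℝ)/2))) * x ^ (-((1:ℝ)/2)) :=
          intervalIntegral.integral_mono_on hc1 (hint a₀ c le_rfl hc1)
            (hrint _ _ a₀ c le_rfl hc1) hptw
      _ = ((1 + X + Y) ^ (k + l) * Ck * (B ^ m * B ^ ((1:ℝ)/2))) *
            ∫ x in a₀..c, x ^ (-((1:ℝ)/2)) := intervalIntegral.integral_const_mul _ _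
      _ = ((1 + X + Y) ^ (k + l) * Ck * (B ^ m * B ^ ((1:ℝ)/2))) *
            ((c ^ (-((1:ℝ)/2) + 1) - a₀ ^ (-((1:ℝ)/2) + 1)) / (-((1:ℝ)/2) + 1)) := by
          rw [integral_rpow]
          right
          constructor
          · norm_num
          · exact fun h => (lt_of_lt_of_le ha₀ (hsub a₀ c le_rfl hc1 h)).ne rfl
      _ ≤ ((1 + X + Y) ^ (k + l) * Ck * (B ^ m * B ^ ((1:ℝ)/2))) * (2 * B ^ ((1:ℝ)/2)) := by
          apply mul_le_mul_of_nonneg_left _ (by positivity)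
          have he : (-((1:ℝ)/2) + 1) = (1:ℝ)/2 := by norm_num
          rw [he]
          have hc' : c ^ ((1:ℝ)/2) ≤ B ^ ((1:ℝ)/2) :=
            Real.rpow_le_rpow (lt_of_lt_of_le ha₀ hc1).le hc2 (by norm_num)
          have ha' : (0:ℝ) ≤ a₀ ^ ((1:ℝ)/2) := Real.rpow_nonneg ha₀.le _
          linarith
      _ = (1 + X + Y) ^ (k + l) * Ck * (2 * B ^ (m + 1)) := by
          rw [mul_assoc ((1 + X + Y) ^ (k + l) * Ck), hkey]
  -- second piece
  have main2 : B ≤ a₁ →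
      (∫ x in B..a₁, (max A x) ^ m * lnp (K / x) ^ k * lnp (x / L) ^ l)
        ≤ (1 + X + Y) ^ (k + l) * (Cl / δ) * B ^ (m + 1) := by
    intro hBa₁
    have hmδ : m + δ + 1 = -δ := by rw [hδdef]; ring
    have hptw : ∀ x ∈ Set.Icc B a₁,
        (max A x) ^ m * lnp (K / x) ^ k * lnp (x / L) ^ l ≤
        ((1 + X + Y) ^ (k + l) * Cl * B ^ (-δ)) * x ^ (m + δ) := by
      intro x hx
      have hx0 : (0:ℝ) < x := lt_of_lt_of_le hB0 hx.1
      have hBx : B ≤ x := hx.1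
      have hxB1 : (1:ℝ) ≤ x / B := (one_le_div hB0).mpr hBx
      have hmax : max A x = x := max_eq_right (hAB.trans hBx)
      have eK : lnp (K / x) ≤ X := by
        exact (lnp_mono (div_nonneg hK hx0.le)
          (div_le_div_of_nonneg_left hK hB0 hBx)).trans hKB
      have eL : lnp (x / L) ≤ Real.log (x / B) + (X + Y) := by
        have hsp : x / L = (x / B) * (B / L) := (div_mul_div_cancel₀ hB0.ne').symm
        rw [hsp]
        exact (lnp_mul_le (div_nonneg hx0.le hB0.le) (div_nonneg hB0.le hL.le)).trans
          (add_le_add (lnp_le_log hxB1) hBL)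
      have hlogxB : 0 ≤ Real.log (x / B) := Real.log_nonneg hxB1
      have eK' : lnp (K / x) ^ k ≤ (1 + X + Y) ^ k :=
        pow_le_pow_left₀ (lnp_nonneg _) (eK.trans (by linarith)) k
      have eL' : lnp (x / L) ^ l ≤ (1 + X + Y) ^ l * (Cl * (x / B) ^ δ) := by
        calc lnp (x / L) ^ l ≤ ((1 + X + Y) * (1 + Real.log (x / B))) ^ l := by
              apply pow_le_pow_left₀ (lnp_nonneg _)
              refine eL.trans ?_
              nlinarith
          _ = (1 + X + Y) ^ l * (1 + Real.log (x / B)) ^ l := mul_pow _ _ _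
          _ ≤ (1 + X + Y) ^ l * (Cl * (x / B) ^ δ) := by
              apply mul_le_mul_of_nonneg_left _ (by positivity)
              rw [hCldef]
              exact one_add_log_pow_le l hδ hxB1
      have hxm : (0:ℝ) ≤ x ^ m := Real.rpow_nonneg hx0.le m
      calc (max A x) ^ m * lnp (K / x) ^ k * lnp (x / L) ^ l
          ≤ x ^ m * (1 + X + Y) ^ k * ((1 + X + Y) ^ l * (Cl * (x / B) ^ δ)) := by
            rw [hmax]
            apply mul_le_mul (mul_le_mul_of_nonneg_left eK' hxm) eL'
              (pow_nonneg (lnp_nonneg _) l)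
            have : (0:ℝ) ≤ (1 + X + Y) ^ k := by positivity
            exact mul_nonneg hxm this
        _ = ((1 + X + Y) ^ (k + l) * Cl * B ^ (-δ)) * x ^ (m + δ) := by
            rw [Real.div_rpow hx0.le hB0.le, Real.rpow_neg hB0.le, pow_add,
              Real.rpow_add hx0]
            ring
    calc (∫ x in B..a₁, (max A x) ^ m * lnp (K / x) ^ k * lnp (x / L) ^ l)
        ≤ ∫ x in B..a₁, ((1 + X + Y) ^ (k + l) * Cl * B ^ (-δ)) * x ^ (m + δ) :=
          intervalIntegral.integral_mono_on hBa₁ (hint B a₁ ha₀B ha₁)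
            (hrint _ _ B a₁ ha₀B ha₁) hptw
      _ = ((1 + X + Y) ^ (k + l) * Cl * B ^ (-δ)) * ∫ x in B..a₁, x ^ (m + δ) :=
          intervalIntegral.integral_const_mul _ _
      _ = ((1 + X + Y) ^ (k + l) * Cl * B ^ (-δ)) *
            ((a₁ ^ (m + δ + 1) - B ^ (m + δ + 1)) / (m + δ + 1)) := by
          rw [integral_rpow]
          right
          constructor
          · intro h
            have : δ = -(m + 1) / 2 := hδdef
            linarith
          · exact fun h => (lt_of_lt_of_le ha₀ ((hsub B a₁ ha₀B ha₁) h)).ne rfl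
      _ ≤ ((1 + X + Y) ^ (k + l) * Cl * B ^ (-δ)) * (B ^ (m + δ + 1) / δ) := by
          apply mul_le_mul_of_nonneg_left _
            (mul_nonneg (mul_nonneg (by positivity) hCl0) (Real.rpow_nonneg hB0.le _))
          rw [hmδ]
          have ha₁' : (0:ℝ) ≤ a₁ ^ (-δ) := Real.rpow_nonneg (le_trans ha₀.le ha₁) _
          have hrw : (a₁ ^ (-δ) - B ^ (-δ)) / (-δ) = (B ^ (-δ) - a₁ ^ (-δ)) / δ := by
            rw [div_neg, ← neg_div, neg_sub]
          rw [hrw]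
          exact (div_le_div_iff_of_pos_right hδ).mpr (by linarith)
      _ = (1 + X + Y) ^ (k + l) * (Cl / δ) * B ^ (m + 1) := by
          rw [hmδ]
          have : B ^ (-δ) * (B ^ (-δ) / δ) = B ^ (m + 1) / δ := by
            rw [div_eq_mul_inv, ← mul_assoc, ← Real.rpow_add hB0,
              show -δ + -δ = m + 1 by rw [hδdef]; ring]
            rw [div_eq_mul_inv]
          rw [mul_assoc, this]
          ring
  rcases le_total a₁ B with hcase | hcase
  · calc (∫ x in a₀..a₁, (max A x) ^ m * lnp (K / x) ^ k * lnp (x / L) ^ l)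
        ≤ (1 + X + Y) ^ (k + l) * Ck * (2 * B ^ (m + 1)) := main1 a₁ ha₁ hcase le_rfl
      _ ≤ B ^ (m + 1) * (M * (1 + X + Y) ^ (k + l)) := by
          have hXY : (0:ℝ) ≤ (1 + X + Y) ^ (k + l) := pow_nonneg (by linarith) _
          have h2 : 0 ≤ (1 + X + Y) ^ (k + l) * (Cl / δ) * B ^ (m + 1) :=
            mul_nonneg (mul_nonneg hXY (div_nonneg hCl0 hδ.le))
              (Real.rpow_nonneg hB0.le _)
          have heq : B ^ (m + 1) * (M * (1 + X + Y) ^ (k + l)) =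
              (1 + X + Y) ^ (k + l) * Ck * (2 * B ^ (m + 1)) +
              (1 + X + Y) ^ (k + l) * (Cl / δ) * B ^ (m + 1) := by
            rw [hMdef]; ring
          linarith
  · have hsplit := intervalIntegral.integral_add_adjacent_intervals
      (hint a₀ B le_rfl ha₀B) (hint B a₁ ha₀B ha₁)
    rw [← hsplit]
    have b1 := main1 B ha₀B le_rfl hcase
    have b2 := main2 hcase
    have heq : B ^ (m + 1) * (M * (1 + X + Y) ^ (k + l)) =
        (1 + X + Y) ^ (k + l) * Ck * (2 * B ^ (m + 1)) +
        (1 + X + Y) ^ (k + l) * (Cl / δ) * B ^ (m + 1) := by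
      rw [hMdef]; ring
    linarith
end

section
/- Let m > −1, 0 ≤ a₀ ≤ a₁, and K, L > 0, k a natural number. Then there exists a polynomial P with nonnegative coefficients such that ∫_{a₀}^{a₁} max(x,L)^m · (ln₊(max(x,K)/max(min(K,x),L)))^k dx ≤ max(a₁,L)^{m+1} · P(ln₊(max(a₁,K)/max(min(K,a₁),L))). -/
lemma lnp_mono_s6 {a b : ℝ} (ha : 0 < a) (h : a ≤ b) : lnp a ≤ lnp b :=
  max_le_max (Real.log_le_log ha h) le_rfl

lemma lnp_mul {a b : ℝ} (ha : 0 < a) (hb : 0 < b) : lnp (a * b) ≤ lnp a + lnp b := by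
  unfold lnp
  rw [Real.log_mul ha.ne' hb.ne']
  exact max_le (add_le_add (le_max_left _ _) (le_max_left _ _)) (by positivity)

lemma lnp_max_one {G : ℝ} (hG : 0 < G) : lnp (max G 1) = lnp G := by
  unfold lnp
  rcases le_total G 1 with h | h
  · rw [max_eq_right h, Real.log_one, max_self, eq_comm,
      max_eq_right (Real.log_nonpos hG.le h)]
  · rw [max_eq_left h]

lemma lnp_le_rpow {t ε : ℝ} (ht : 1 ≤ t) (hε : 0 < ε) : lnp t ≤ t ^ ε / ε := by
  have h0 : (0:ℝ) < t := lt_of_lt_of_le one_pos ht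
  have h1 : Real.log t ≤ t ^ ε / ε := by
    have h := Real.log_le_sub_one_of_pos (Real.rpow_pos_of_pos h0 ε)
    rw [Real.log_rpow h0] at h
    rw [le_div_iff₀ hε]
    nlinarith
  exact max_le h1 (by positivity)

/-- Lemma (Taylor expansion): for `m > −1` and `k : ℕ`, there is a polynomial `P` with
nonnegative coefficients such that for all `0 ≤ a₀ ≤ a₁` and `K, L > 0`,
`∫_{a₀}^{a₁} max(x,L)^m (ln₊(max(x,K)/max(min(K,x),L)))^k dx
  ≤ max(a₁,L)^{m+1} · P(ln₊(max(a₁,K)/max(min(K,a₁),L)))`. -/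
theorem taylor_expansion_integral (m : ℝ) (hm : -1 < m) (k : ℕ) :
    ∃ P : Polynomial ℝ, (∀ n, 0 ≤ P.coeff n) ∧
      ∀ a₀ a₁ K L : ℝ, 0 ≤ a₀ → a₀ ≤ a₁ → 0 < K → 0 < L →
        (∫ x in a₀..a₁, (max x L) ^ m * (lnp (max x K / max (min K x) L)) ^ k)
          ≤ (max a₁ L) ^ (m + 1) * P.eval (lnp (max a₁ K / max (min K a₁) L)) := by
  have hm1 : (0:ℝ) < m + 1 := by linarith
  set ε : ℝ := (m + 1) / (2 * (k + 1)) with hεdef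
  have hε : 0 < ε := by positivity
  set c : ℝ := 1 / ε with hcdef
  have hc : 0 < c := by positivity
  set C₀ : ℝ := max 1 (2 / (m + 1)) with hC₀def
  have hC₀1 : (1:ℝ) ≤ C₀ := le_max_left _ _
  have hC₀0 : (0:ℝ) ≤ C₀ := by linarith
  refine ⟨Polynomial.C C₀ * (Polynomial.X + Polynomial.C c) ^ k, ?_, ?_⟩
  · intro n
    rw [Polynomial.coeff_C_mul, Polynomial.coeff_X_add_C_pow]
    positivity
  intro a₀ a₁ K L ha₀ ha₀₁ hK hL
  set M : ℝ := max a₁ L with hMdef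
  have hM : 0 < M := lt_max_of_lt_right hL
  have ha₁M : a₁ ≤ M := le_max_left _ _
  set G : ℝ := max a₁ K / max (min K a₁) L with hGdef
  have hG : 0 < G := div_pos (lt_max_of_lt_right hK) (lt_max_of_lt_right hL)
  set E : ℝ := lnp G with hEdef
  have hE : 0 ≤ E := lnp_nonneg _
  have hEc : 0 ≤ E + c := by linarith
  -- pointwise bound
  have key : ∀ x ∈ Set.Icc a₀ a₁,
      (max x L) ^ m * (lnp (max x K / max (min K x) L)) ^ k
        ≤ (E + c) ^ k * M ^ ((m+1)/2) * (max x L) ^ ((m-1)/2) := by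
    intro x hx
    obtain ⟨hx0, hx1⟩ := hx
    have hu0 : (0:ℝ) < max x L := lt_max_of_lt_right hL
    have huM : max x L ≤ M := max_le_max hx1 le_rfl
    set t : ℝ := M / max x L with htdef
    have ht1 : 1 ≤ t := (one_le_div hu0).2 huM
    have ht0 : (0:ℝ) < t := lt_of_lt_of_le one_pos ht1
    have htε : 1 ≤ t ^ ε := Real.one_le_rpow ht1 hε.le
    have hden : 0 < max (min K x) L := lt_max_of_lt_right hL
    -- step 1 : the argument of lnp is at most max G 1 * t
    have hgle : max x K / max (min K x) L ≤ max G 1 * t := by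
      rcases le_total x K with hxK | hxK
      · rw [min_eq_right hxK, max_eq_right hxK]
        have hKle : K ≤ max G 1 * M := by
          rcases le_total K a₁ with hKa | hKa
          · calc K ≤ M := le_trans hKa ha₁M
              _ ≤ max G 1 * M := le_mul_of_one_le_left hM.le (le_max_right _ _)
          · have hGeq : G = K / M := by
              rw [hGdef, max_eq_right hKa, min_eq_right hKa]
            have : G * M = K := by
              rw [hGeq, div_mul_cancel₀ _ hM.ne']
            calc K = G * M := this.symm
              _ ≤ max G 1 * M := by
                  exact mul_le_mul_of_nonneg_right (le_max_left _ _) hM.le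
        calc K / max x L ≤ (max G 1 * M) / max x L := by gcongr
          _ = max G 1 * t := by rw [htdef, mul_div_assoc]
      · rw [min_eq_left hxK, max_eq_left hxK]
        have hKa : K ≤ a₁ := le_trans hxK hx1
        have hGeq : G = a₁ / max K L := by
          rw [hGdef, max_eq_left hKa, min_eq_left hKa]
        have hd : 0 < max K L := lt_max_of_lt_left hK
        calc x / max K L ≤ a₁ / max K L := by gcongr
          _ = G := hGeq.symm
          _ ≤ max G 1 := le_max_left _ _
          _ ≤ max G 1 * t :=
              le_mul_of_one_le_right (le_trans zero_le_one (le_max_right _ _)) ht1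
    have hlog : lnp (max x K / max (min K x) L) ≤ E + lnp t := by
      calc lnp (max x K / max (min K x) L) ≤ lnp (max G 1 * t) :=
            lnp_mono_s6 (div_pos (lt_max_of_lt_right hK) hden) hgle
        _ ≤ lnp (max G 1) + lnp t :=
            lnp_mul (lt_of_lt_of_le one_pos (le_max_right _ _)) ht0
        _ = E + lnp t := by rw [lnp_max_one hG]
    have hlt : lnp t ≤ c * t ^ ε := by
      have h := lnp_le_rpow ht1 hε
      calc lnp t ≤ t ^ ε / ε := h
        _ = c * t ^ ε := by rw [hcdef]; ring
    have hsum : E + lnp t ≤ (E + c) * t ^ ε := by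
      nlinarith [mul_nonneg hE (sub_nonneg.2 htε)]
    have hpow : (lnp (max x K / max (min K x) L)) ^ k ≤ (E + c) ^ k * t ^ ((m+1)/2) := by
      have h1 : (lnp (max x K / max (min K x) L)) ^ k ≤ ((E + c) * t ^ ε) ^ k :=
        pow_le_pow_left₀ (lnp_nonneg _) (le_trans hlog hsum) k
      rw [mul_pow] at h1
      refine h1.trans ?_
      have h2 : (t ^ ε) ^ k = t ^ (ε * k) := by
        rw [← Real.rpow_natCast (t ^ ε) k, ← Real.rpow_mul ht0.le]
      rw [h2]
      have h3 : ε * k ≤ (m+1)/2 := by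
        rw [hεdef, div_mul_eq_mul_div, div_le_div_iff₀ (by positivity) two_pos]
        have hk0 : (0:ℝ) ≤ (k:ℝ) := Nat.cast_nonneg k
        nlinarith
      have h4 : t ^ (ε * k) ≤ t ^ ((m+1)/2) := Real.rpow_le_rpow_of_exponent_le ht1 h3
      exact mul_le_mul_of_nonneg_left h4 (pow_nonneg hEc k)
    calc (max x L) ^ m * (lnp (max x K / max (min K x) L)) ^ k
        ≤ (max x L) ^ m * ((E + c) ^ k * t ^ ((m+1)/2)) :=
          mul_le_mul_of_nonneg_left hpow (Real.rpow_nonneg hu0.le m)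
      _ = (E + c) ^ k * M ^ ((m+1)/2) * (max x L) ^ ((m-1)/2) := by
          have h4 : (max x L) ^ ((m-1)/2) = (max x L) ^ m / (max x L) ^ ((m+1)/2) := by
            rw [← Real.rpow_sub hu0]
            congr 1
            ring
          rw [htdef, Real.div_rpow hM.le hu0.le, h4]
          ring
  -- continuity and integrability
  have hgcont : Continuous fun x : ℝ => max x K / max (min K x) L := by
    apply Continuous.div
    · exact continuous_id.max continuous_const
    · exact (continuous_const.min continuous_id).max continuous_const
    · intro x; exact ne_of_gt (lt_max_of_lt_right hL)
  have hgpos : ∀ x : ℝ, 0 < max x K / max (min K x) L := fun x =>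
    div_pos (lt_max_of_lt_right hK) (lt_max_of_lt_right hL)
  have hmaxL : Continuous fun x : ℝ => max x L := continuous_id.max continuous_const
  have hmaxLne : ∀ x : ℝ, max x L ≠ 0 := fun x => ne_of_gt (lt_max_of_lt_right hL)
  have hfcont : Continuous fun x : ℝ =>
      (max x L) ^ m * (lnp (max x K / max (min K x) L)) ^ k := by
    apply Continuous.mul
    · exact hmaxL.rpow_const fun x => Or.inl (hmaxLne x)
    · apply Continuous.pow
      unfold lnp
      rw [continuous_iff_continuousAt]
      intro x
      have h1 : ContinuousAt (fun x : ℝ => Real.log (max x K / max (min K x) L)) x := by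
        apply ContinuousAt.comp (f := fun x : ℝ => max x K / max (min K x) L)
          (g := Real.log)
        · exact Real.continuousAt_log (ne_of_gt (hgpos x))
        · exact hgcont.continuousAt
      exact Filter.Tendsto.max h1 tendsto_const_nhds
  have hucont : Continuous fun x : ℝ => (max x L) ^ ((m-1)/2) :=
    hmaxL.rpow_const fun x => Or.inl (hmaxLne x)
  have hbcont : Continuous fun x : ℝ =>
      (E + c) ^ k * M ^ ((m+1)/2) * (max x L) ^ ((m-1)/2) := continuous_const.mul hucont
  -- integral comparisons
  have step1 : (∫ x in a₀..a₁, (max x L) ^ m * (lnp (max x K / max (min K x) L)) ^ k)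
      ≤ ∫ x in a₀..a₁, (E + c) ^ k * M ^ ((m+1)/2) * (max x L) ^ ((m-1)/2) :=
    intervalIntegral.integral_mono_on ha₀₁ (hfcont.intervalIntegrable _ _)
      (hbcont.intervalIntegrable _ _) key
  have step2 : (∫ x in a₀..a₁, (E + c) ^ k * M ^ ((m+1)/2) * (max x L) ^ ((m-1)/2))
      = (E + c) ^ k * M ^ ((m+1)/2) * ∫ x in a₀..a₁, (max x L) ^ ((m-1)/2) :=
    intervalIntegral.integral_const_mul _ _
  have hr : (-1:ℝ) < (m-1)/2 := by linarith
  have step3 : (∫ x in a₀..a₁, (max x L) ^ ((m-1)/2)) ≤ C₀ * M ^ ((m+1)/2) := by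
    rcases le_or_gt m 1 with hm2 | hm2
    · have hmono : (∫ x in a₀..a₁, (max x L) ^ ((m-1)/2))
          ≤ ∫ x in a₀..a₁, x ^ ((m-1)/2) := by
        rw [intervalIntegral.integral_of_le ha₀₁, intervalIntegral.integral_of_le ha₀₁]
        apply MeasureTheory.setIntegral_mono_on
        · exact (intervalIntegrable_iff_integrableOn_Ioc_of_le ha₀₁).1
            (hucont.intervalIntegrable _ _)
        · exact (intervalIntegrable_iff_integrableOn_Ioc_of_le ha₀₁).1
            (intervalIntegral.intervalIntegrable_rpow' hr)
        · exact measurableSet_Ioc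
        · intro x hx
          have hx0 : 0 < x := lt_of_le_of_lt ha₀ hx.1
          exact Real.rpow_le_rpow_of_nonpos hx0 (le_max_left _ _) (by linarith)
      have hval : (∫ x in a₀..a₁, x ^ ((m-1)/2))
          = (a₁ ^ ((m-1)/2 + 1) - a₀ ^ ((m-1)/2 + 1)) / ((m-1)/2 + 1) :=
        integral_rpow (Or.inl hr)
      have he : (m-1)/2 + 1 = (m+1)/2 := by ring
      refine hmono.trans ?_
      rw [hval, he]
      have h1 : a₁ ^ ((m+1)/2) ≤ M ^ ((m+1)/2) :=
        Real.rpow_le_rpow (le_trans ha₀ ha₀₁) ha₁M (by positivity)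
      have h2 : (0:ℝ) ≤ a₀ ^ ((m+1)/2) := Real.rpow_nonneg ha₀ _
      have h3 : (2 / (m+1)) ≤ C₀ := le_max_right _ _
      have h4 : (0:ℝ) ≤ M ^ ((m+1)/2) := Real.rpow_nonneg hM.le _
      calc (a₁ ^ ((m+1)/2) - a₀ ^ ((m+1)/2)) / ((m+1)/2)
          ≤ M ^ ((m+1)/2) / ((m+1)/2) := by
            apply div_le_div_of_nonneg_right ?_ (by positivity)
            · linarith
        _ = (2/(m+1)) * M ^ ((m+1)/2) := by field_simp
        _ ≤ C₀ * M ^ ((m+1)/2) := mul_le_mul_of_nonneg_right h3 h4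
    · have hconst : (∫ x in a₀..a₁, (max x L) ^ ((m-1)/2))
          ≤ ∫ _x in a₀..a₁, M ^ ((m-1)/2) := by
        apply intervalIntegral.integral_mono_on ha₀₁ (hucont.intervalIntegrable _ _)
          (intervalIntegrable_const)
        intro x hx
        exact Real.rpow_le_rpow (le_max_of_le_right hL.le) (max_le_max hx.2 le_rfl)
          (by linarith)
      rw [intervalIntegral.integral_const, smul_eq_mul] at hconst
      refine hconst.trans ?_
      have h4 : (0:ℝ) ≤ M ^ ((m-1)/2) := Real.rpow_nonneg hM.le _
      calc (a₁ - a₀) * M ^ ((m-1)/2) ≤ M * M ^ ((m-1)/2) := by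
            apply mul_le_mul_of_nonneg_right ?_ h4
            linarith
        _ = M ^ ((m+1)/2) := by
            nth_rewrite 1 [← Real.rpow_one M]
            rw [← Real.rpow_add hM]
            congr 1
            ring
        _ ≤ C₀ * M ^ ((m+1)/2) :=
            le_mul_of_one_le_left (Real.rpow_nonneg hM.le _) hC₀1
  have hMp : (0:ℝ) ≤ M ^ ((m+1)/2) := Real.rpow_nonneg hM.le _
  have heval : Polynomial.eval E (Polynomial.C C₀ * (Polynomial.X + Polynomial.C c) ^ k)
      = C₀ * (E + c) ^ k := by
    simp [Polynomial.eval_mul, Polynomial.eval_pow]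
  calc (∫ x in a₀..a₁, (max x L) ^ m * (lnp (max x K / max (min K x) L)) ^ k)
      ≤ (E + c) ^ k * M ^ ((m+1)/2) * ∫ x in a₀..a₁, (max x L) ^ ((m-1)/2) := by
        rw [← step2]; exact step1
    _ ≤ (E + c) ^ k * M ^ ((m+1)/2) * (C₀ * M ^ ((m+1)/2)) := by
        apply mul_le_mul_of_nonneg_left step3
        exact mul_nonneg (pow_nonneg hEc k) hMp
    _ = M ^ (m+1) * (C₀ * (E + c) ^ k) := by
        rw [show m + 1 = (m+1)/2 + (m+1)/2 by ring, Real.rpow_add hM]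
        ring
    _ = M ^ (m+1) * Polynomial.eval E (Polynomial.C C₀ * (Polynomial.X + Polynomial.C c) ^ k) := by
        rw [heval]
end

section
/- For a ≥ 0 and vectors u, v ∈ ℝ⁴, there exists a polynomial P with nonnegative coefficients (independent of a, u, v) such that ∫₀¹ |v|/(a + |u + t·v|) dt ≤ P(ln₊(|v|/a)), where for a = 0 the right-hand side is interpreted via the convention ln₊(|v|/0) = ∞ or one restricts to a > 0. -/
-- subadditivity of arsinh on nonnegatives
lemma arsinh_add_le {x d : ℝ} (hx : 0 ≤ x) (hd : 0 ≤ d) :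
    Real.arsinh (x + d) ≤ Real.arsinh x + Real.arsinh d := by
  have h1 : (0:ℝ) < x + Real.sqrt (1 + x ^ 2) := by
    nlinarith [Real.sqrt_nonneg (1 + x^2), Real.sq_sqrt (by positivity : (0:ℝ) ≤ 1 + x^2),
      Real.sqrt_pos.mpr (by positivity : (0:ℝ) < 1 + x^2)]
  have h2 : (0:ℝ) < d + Real.sqrt (1 + d ^ 2) := by
    nlinarith [Real.sqrt_nonneg (1 + d^2), Real.sqrt_pos.mpr (by positivity : (0:ℝ) < 1 + d^2)]
  have key : x + d + Real.sqrt (1 + (x + d) ^ 2)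
      ≤ (x + Real.sqrt (1 + x ^ 2)) * (d + Real.sqrt (1 + d ^ 2)) := by
    set s1 := Real.sqrt (1 + x ^ 2) with hs1
    set s2 := Real.sqrt (1 + d ^ 2) with hs2
    set s3 := Real.sqrt (1 + (x + d) ^ 2) with hs3
    have hs1sq : s1 ^ 2 = 1 + x ^ 2 := Real.sq_sqrt (by positivity)
    have hs2sq : s2 ^ 2 = 1 + d ^ 2 := Real.sq_sqrt (by positivity)
    have hs3sq : s3 ^ 2 = 1 + (x + d) ^ 2 := Real.sq_sqrt (by positivity)
    have hs1one : 1 ≤ s1 := by nlinarith [Real.sqrt_nonneg (1 + x^2)]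
    have hs2one : 1 ≤ s2 := by nlinarith [Real.sqrt_nonneg (1 + d^2)]
    have hs3nn : 0 ≤ s3 := Real.sqrt_nonneg _
    -- s3 ≤ x*d + s1*s2
    have h12 : 1 ≤ s1 * s2 := by nlinarith
    have hprod : 1 + (x + d) ^ 2 ≤ (x * d + s1 * s2) ^ 2 := by
      nlinarith [mul_nonneg (mul_nonneg hx hd) (by linarith : (0:ℝ) ≤ s1 * s2 - 1)]
    have hkey : s3 ≤ x * d + s1 * s2 := by
      have h4 : (0:ℝ) ≤ x * d + s1 * s2 := by nlinarith [mul_nonneg hx hd]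
      calc s3 ≤ Real.sqrt ((x * d + s1 * s2) ^ 2) := Real.sqrt_le_sqrt hprod
        _ = x * d + s1 * s2 := Real.sqrt_sq h4
    nlinarith [mul_nonneg hx hd]
  calc Real.arsinh (x + d) = Real.log (x + d + Real.sqrt (1 + (x+d) ^ 2)) := rfl
    _ ≤ Real.log ((x + Real.sqrt (1 + x ^ 2)) * (d + Real.sqrt (1 + d ^ 2))) := by
        apply Real.log_le_log (by positivity) key
    _ = Real.arsinh x + Real.arsinh d := by
        rw [Real.log_mul (ne_of_gt h1) (ne_of_gt h2)]; rfl

lemma arsinh_diff_le (x d : ℝ) (hd : 0 ≤ d) :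
    Real.arsinh (x + d) - Real.arsinh x ≤ 2 * Real.arsinh d := by
  have hdn : 0 ≤ Real.arsinh d := Real.arsinh_nonneg_iff.mpr hd
  rcases le_or_gt 0 x with hx | hx
  · have := arsinh_add_le hx hd
    linarith
  rcases le_or_gt (x + d) 0 with hxd | hxd
  · have h1 : Real.arsinh (-(x+d) + d) ≤ Real.arsinh (-(x+d)) + Real.arsinh d :=
      arsinh_add_le (by linarith) hd
    have e1 : -(x+d) + d = -x := by ring
    rw [e1, Real.arsinh_neg, Real.arsinh_neg] at h1
    linarith
  · have h1 : Real.arsinh (x + d) ≤ Real.arsinh d :=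
      Real.arsinh_le_arsinh.mpr (by linarith)
    have h2 : Real.arsinh (-x) ≤ Real.arsinh d :=
      Real.arsinh_le_arsinh.mpr (by linarith)
    rw [Real.arsinh_neg] at h2
    linarith

lemma arsinh_le_log (d : ℝ) (hd : 0 ≤ d) : Real.arsinh d ≤ Real.log 3 + lnp d := by
  have hs : Real.sqrt (1 + d ^ 2) ≤ 1 + d := by
    rw [show (1:ℝ) + d = Real.sqrt ((1+d)^2) from (Real.sqrt_sq (by linarith)).symm]
    exact Real.sqrt_le_sqrt (by nlinarith)
  have h1 : Real.arsinh d ≤ Real.log (1 + 2 * d) := by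
    apply Real.log_le_log (by positivity)
    linarith
  rcases le_or_gt d 1 with h | h
  · calc Real.arsinh d ≤ Real.log (1 + 2 * d) := h1
      _ ≤ Real.log 3 := Real.log_le_log (by linarith) (by linarith)
      _ ≤ Real.log 3 + lnp d := by unfold lnp; simp [le_max_right]
  · calc Real.arsinh d ≤ Real.log (1 + 2 * d) := h1
      _ ≤ Real.log (3 * d) := Real.log_le_log (by linarith) (by nlinarith)
      _ = Real.log 3 + Real.log d := Real.log_mul (by norm_num) (by linarith)
      _ ≤ Real.log 3 + lnp d := by unfold lnp; simp [le_max_left]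


/-- Lemma (Slaloms): there is a polynomial `P` with nonnegative coefficients, independent of
`a, u, v`, such that for all `a > 0` and `u, v ∈ ℝ⁴`,
`∫₀¹ |v|/(a + |u + t·v|) dt ≤ P(ln₊(|v|/a))`. -/
theorem slalom_estimate :
    ∃ P : Polynomial ℝ, (∀ n, 0 ≤ P.coeff n) ∧
      ∀ (a : ℝ) (u v : EuclideanSpace ℝ (Fin 4)), 0 < a →
        (∫ t in (0:ℝ)..1, ‖v‖ / (a + ‖u + t • v‖)) ≤ P.eval (lnp (‖v‖ / a)) := by
  refine ⟨Polynomial.C (2 * Real.log 3) + Polynomial.C 2 * Polynomial.X, ?_, ?_⟩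
  · intro n
    rcases n with _ | _ | n <;>
      simp [Polynomial.coeff_add, Polynomial.coeff_C, Polynomial.coeff_C_mul,
        Polynomial.coeff_X] <;>
      positivity
  intro a u v ha
  have hlnp : 0 ≤ lnp (‖v‖ / a) := le_max_right _ _
  have heval : (Polynomial.C (2 * Real.log 3) + Polynomial.C 2 * Polynomial.X).eval
      (lnp (‖v‖ / a)) = 2 * Real.log 3 + 2 * lnp (‖v‖ / a) := by simp
  rw [heval]
  have hlog3 : 0 < Real.log 3 := Real.log_pos (by norm_num)
  rcases eq_or_ne v 0 with rfl | hv
  · simp [lnp]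
    nlinarith [hlog3, le_max_right (Real.log (0/a)) (0:ℝ)]
  have hL : 0 < ‖v‖ := norm_pos_iff.mpr hv
  set L := ‖v‖ with hLdef
  set c := (inner ℝ u v : ℝ) / L with hcdef
  -- pointwise bound
  have hpt : ∀ t : ℝ, L / (a + ‖u + t • v‖) ≤ L / Real.sqrt (a ^ 2 + (c + t * L) ^ 2) := by
    intro t
    have hinner : |c + t * L| ≤ ‖u + t • v‖ := by
      have h1 : |(inner ℝ (u + t • v) v : ℝ)| ≤ ‖u + t • v‖ * ‖v‖ := abs_real_inner_le_norm _ _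
      have h2 : (inner ℝ (u + t • v) v : ℝ) = (inner ℝ u v : ℝ) + t * L ^ 2 := by
        rw [inner_add_left, real_inner_smul_left, real_inner_self_eq_norm_sq]
      have h3 : c + t * L = ((inner ℝ u v : ℝ) + t * L ^ 2) / L := by
        rw [hcdef]; field_simp
      rw [h3, abs_div, abs_of_pos hL, div_le_iff₀ hL, ← h2]
      exact h1
    have hsq : Real.sqrt (a ^ 2 + (c + t * L) ^ 2) ≤ a + ‖u + t • v‖ := by
      have : Real.sqrt (a ^ 2 + (c + t * L) ^ 2) ≤ a + |c + t * L| := by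
        rw [show a + |c + t*L| = Real.sqrt ((a + |c + t*L|)^2) from
          (Real.sqrt_sq (by positivity)).symm]
        apply Real.sqrt_le_sqrt
        have := abs_nonneg (c + t * L)
        nlinarith [sq_abs (c + t * L)]
      linarith
    apply div_le_div_of_nonneg_left hL.le (Real.sqrt_pos.mpr (by positivity)) hsq
  -- integrability
  have hcont1 : Continuous fun t : ℝ => L / (a + ‖u + t • v‖) := by
    apply Continuous.div continuous_const
    · exact continuous_const.add ((continuous_const.add
        (continuous_id.smul continuous_const)).norm)
    · intro t; positivity
  have hcont2 : Continuous fun t : ℝ => L / Real.sqrt (a ^ 2 + (c + t * L) ^ 2) := by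
    apply Continuous.div continuous_const
    · exact (Real.continuous_sqrt.comp (by continuity))
    · intro t
      have : (0:ℝ) < Real.sqrt (a ^ 2 + (c + t * L) ^ 2) :=
        Real.sqrt_pos.mpr (by positivity)
      exact ne_of_gt this
  have hmono : (∫ t in (0:ℝ)..1, L / (a + ‖u + t • v‖))
      ≤ ∫ t in (0:ℝ)..1, L / Real.sqrt (a ^ 2 + (c + t * L) ^ 2) := by
    apply intervalIntegral.integral_mono_on (by norm_num)
      (hcont1.intervalIntegrable 0 1) (hcont2.intervalIntegrable 0 1)
    intro t _
    exact hpt t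
  -- FTC
  have hftc : (∫ t in (0:ℝ)..1, L / Real.sqrt (a ^ 2 + (c + t * L) ^ 2))
      = Real.arsinh ((c + L) / a) - Real.arsinh (c / a) := by
    have hderiv : ∀ t ∈ Set.uIcc (0:ℝ) 1,
        HasDerivAt (fun t : ℝ => Real.arsinh ((c + t * L) / a))
          (L / Real.sqrt (a ^ 2 + (c + t * L) ^ 2)) t := by
      intro t _
      have haff : HasDerivAt (fun t : ℝ => (c + t * L) / a) (L / a) t := by
        have : HasDerivAt (fun t : ℝ => c + t * L) L t := by
          simpa using ((hasDerivAt_id t).mul_const L).const_add c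
        simpa using this.div_const a
      have := (Real.hasDerivAt_arsinh ((c + t * L) / a)).comp t haff
      refine this.congr_deriv ?_
      have hsqrt : Real.sqrt (a ^ 2 + (c + t * L) ^ 2)
          = a * Real.sqrt (1 + ((c + t * L) / a) ^ 2) := by
        rw [show a = Real.sqrt (a ^ 2) from (Real.sqrt_sq ha.le).symm]
        rw [← Real.sqrt_mul (by positivity)]
        rw [Real.sqrt_sq ha.le]
        congr 1
        field_simp
      rw [hsqrt]
      field_simp
    rw [intervalIntegral.integral_eq_sub_of_hasDerivAt hderiv (hcont2.intervalIntegrable 0 1)]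
    simp
  have hbound : Real.arsinh ((c + L) / a) - Real.arsinh (c / a) ≤ 2 * Real.arsinh (L / a) := by
    have := arsinh_diff_le (c / a) (L / a) (by positivity)
    rw [show c / a + L / a = (c + L) / a by ring] at this
    exact this
  have hfinal : Real.arsinh (L / a) ≤ Real.log 3 + lnp (L / a) :=
    arsinh_le_log _ (by positivity)
  calc (∫ t in (0:ℝ)..1, L / (a + ‖u + t • v‖))
      ≤ ∫ t in (0:ℝ)..1, L / Real.sqrt (a ^ 2 + (c + t * L) ^ 2) := hmono
    _ = Real.arsinh ((c + L) / a) - Real.arsinh (c / a) := hftc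
    _ ≤ 2 * Real.arsinh (L / a) := hbound
    _ ≤ 2 * Real.log 3 + 2 * lnp (L / a) := by linarith
end

section
/- In the slalom estimate, if |u| ≥ |v| and a > 0, then ∫₀¹ |v|/(a + |u + t·v|) dt ≤ ln(1 + |v|/a). -/
/-- In the slalom estimate, if `|u| ≥ |v|` and `a > 0`, then
`∫₀¹ |v|/(a + |u + t·v|) dt ≤ ln(1 + |v|/a)`. -/
theorem slalom_estimate_large_u (a : ℝ) (ha : 0 < a)
    (u v : EuclideanSpace ℝ (Fin 4)) (h : ‖v‖ ≤ ‖u‖) :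
    (∫ t in (0:ℝ)..1, ‖v‖ / (a + ‖u + t • v‖)) ≤ Real.log (1 + ‖v‖ / a) := by
  set c := ‖v‖ with hc
  have hc0 : 0 ≤ c := norm_nonneg v
  have hpos : ∀ t ∈ Set.Icc (0:ℝ) 1, 0 < a + (1 - t) * c := by
    intro t ht
    have : 0 ≤ (1 - t) * c := mul_nonneg (by linarith [ht.2]) hc0
    linarith
  have hle : ∀ t ∈ Set.Icc (0:ℝ) 1, a + (1 - t) * c ≤ a + ‖u + t • v‖ := by
    intro t ht
    have h1 : ‖u‖ ≤ ‖u + t • v‖ + ‖t • v‖ := by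
      calc ‖u‖ = ‖(u + t • v) - t • v‖ := by rw [add_sub_cancel_right]
        _ ≤ _ := norm_sub_le _ _
    have h2 : ‖t • v‖ = t * c := by
      rw [norm_smul, Real.norm_eq_abs, abs_of_nonneg ht.1]
    nlinarith [h1, ht.1, ht.2]
  have cont1 : ContinuousOn (fun t : ℝ => c / (a + ‖u + t • v‖)) (Set.Icc 0 1) := by
    apply ContinuousOn.div continuousOn_const
    · exact (continuous_const.add ((continuous_const.add
        (continuous_id.smul continuous_const)).norm)).continuousOn
    · intro t ht
      positivity
  have cont2 : ContinuousOn (fun t : ℝ => c / (a + (1 - t) * c)) (Set.Icc 0 1) := by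
    apply ContinuousOn.div continuousOn_const (by fun_prop)
    intro t ht
    exact (hpos t ht).ne'
  have hmono : (∫ t in (0:ℝ)..1, c / (a + ‖u + t • v‖))
      ≤ ∫ t in (0:ℝ)..1, c / (a + (1 - t) * c) := by
    apply intervalIntegral.integral_mono_on zero_le_one
      (cont1.intervalIntegrable_of_Icc zero_le_one)
      (cont2.intervalIntegrable_of_Icc zero_le_one)
    intro t ht
    gcongr
    · exact hpos t ht
    · linarith [hle t ht]
  refine hmono.trans (le_of_eq ?_)
  have hderiv : ∀ t ∈ Set.uIcc (0:ℝ) 1,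
      HasDerivAt (fun s : ℝ => -Real.log (a + (1 - s) * c))
        (c / (a + (1 - t) * c)) t := by
    intro t ht
    rw [Set.uIcc_of_le zero_le_one] at ht
    have hg : HasDerivAt (fun s : ℝ => a + (1 - s) * c) (-c) t := by
      have : HasDerivAt (fun s : ℝ => a + (1 - s) * c) (0 + (0 - 1) * c) t := by
        exact (hasDerivAt_const t a).add (((hasDerivAt_const t (1:ℝ)).sub
          (hasDerivAt_id t)).mul_const c)
      simpa using this
    have := (hg.log (hpos t ht).ne').neg
    simpa [neg_div, Pi.neg_def] using this
  have hint : ∫ t in (0:ℝ)..1, c / (a + (1 - t) * c)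
      = (-Real.log (a + (1 - 1) * c)) - (-Real.log (a + (1 - 0) * c)) := by
    apply intervalIntegral.integral_eq_sub_of_hasDerivAt hderiv
    exact cont2.intervalIntegrable_of_Icc zero_le_one
  rw [hint]
  rw [show (1:ℝ) + c / a = (a + c) / a by field_simp]
  rw [Real.log_div (by positivity) ha.ne']
  ring_nf
end

section
/- Let f : ℝ⁴ → [0,∞) be measurable with ∫ exp(−α|x|²) f(x)·max(|x|,1)^m dx < ∞ for all α > 0. Then for any a ∈ ℝ⁴, β ≥ 1, integer m ≥ 0, and α > 0, there exists a constant c (depending on α, β, m, f but not on a) such that ∫ exp(−α|x|²) f(x) · max(|x + a|, β)^{−m} dx ≤ c · max(|a|, β)^{−m}. -/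
open MeasureTheory

lemma key_ineq {E : Type*} [NormedAddCommGroup E] (a x : E) (β : ℝ) (hβ : 1 ≤ β) :
    max ‖a‖ β ≤ 2 * max ‖x‖ 1 * max ‖x + a‖ β := by
  have hx1 : ‖x‖ ≤ max ‖x‖ 1 := le_max_left _ _
  have h1 : (1:ℝ) ≤ max ‖x‖ 1 := le_max_right _ _
  have hb : β ≤ max ‖x + a‖ β := le_max_right _ _
  have hb0 : (0:ℝ) < β := lt_of_lt_of_le one_pos hβ
  rcases le_or_gt (‖a‖ / 2) ‖x‖ with h | h
  · apply max_le
    · nlinarith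
    · nlinarith
  · have hxa : ‖a‖ - ‖x‖ ≤ ‖x + a‖ := by
      have := norm_add_le x a -- not enough; use reverse
      have h2 : ‖a‖ ≤ ‖x + a‖ + ‖x‖ := by
        calc ‖a‖ = ‖(x + a) - x‖ := by rw [add_sub_cancel_left]
        _ ≤ ‖x + a‖ + ‖x‖ := norm_sub_le _ _
      linarith
    have hxa2 : ‖a‖ / 2 ≤ ‖x + a‖ := by linarith
    have hm : ‖a‖ / 2 ≤ max ‖x + a‖ β := le_trans hxa2 (le_max_left _ _)
    apply max_le
    · nlinarith
    · nlinarith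

/-- Lemma (p integration, negative powers): let `f : ℝ⁴ → [0,∞)` be measurable with
`∫ exp(−α|x|²) f(x) max(|x|,1)^m dx < ∞` for all `α > 0`.  Then for any `a ∈ ℝ⁴`, `β ≥ 1`,
`m : ℕ` and `α > 0`, there is a constant `c` (independent of `a`) such that
`∫ exp(−α|x|²) f(x) max(|x+a|,β)^{−m} dx ≤ c · max(|a|,β)^{−m}`. -/
theorem p_integration_neg (f : EuclideanSpace ℝ (Fin 4) → ℝ)
    (hf : Measurable f) (hf0 : ∀ x, 0 ≤ f x) (m : ℕ)
    (hint : ∀ α : ℝ, 0 < α →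
      Integrable (fun x => Real.exp (-α * ‖x‖ ^ 2) * f x * (max ‖x‖ 1) ^ m))
    (α β : ℝ) (hα : 0 < α) (hβ : 1 ≤ β) :
    ∃ c : ℝ, ∀ a : EuclideanSpace ℝ (Fin 4),
      (∫ x, Real.exp (-α * ‖x‖ ^ 2) * f x * ((max ‖x + a‖ β) ^ m)⁻¹)
        ≤ c * ((max ‖a‖ β) ^ m)⁻¹ := by
  have hI := hint α hα
  set I : ℝ := ∫ x, Real.exp (-α * ‖x‖ ^ 2) * f x * (max ‖x‖ 1) ^ m with hIdef
  refine ⟨2 ^ m * I, fun a => ?_⟩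
  have hb0 : (0:ℝ) < β := lt_of_lt_of_le one_pos hβ
  have hma : (0:ℝ) < max ‖a‖ β := lt_of_lt_of_le hb0 (le_max_right _ _)
  have hbound : ∀ x : EuclideanSpace ℝ (Fin 4),
      Real.exp (-α * ‖x‖ ^ 2) * f x * ((max ‖x + a‖ β) ^ m)⁻¹
        ≤ (2 ^ m * ((max ‖a‖ β) ^ m)⁻¹) *
          (Real.exp (-α * ‖x‖ ^ 2) * f x * (max ‖x‖ 1) ^ m) := by
    intro x
    have hmx : (0:ℝ) < max ‖x‖ 1 := lt_of_lt_of_le one_pos (le_max_right _ _)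
    have hmxa : (0:ℝ) < max ‖x + a‖ β := lt_of_lt_of_le hb0 (le_max_right _ _)
    have hk := key_ineq a x β hβ
    have hpow : (max ‖a‖ β) ^ m ≤ (2 * max ‖x‖ 1) ^ m * (max ‖x + a‖ β) ^ m := by
      rw [← mul_pow]
      exact pow_le_pow_left₀ hma.le hk m
    have hinv : ((max ‖x + a‖ β) ^ m)⁻¹ ≤
        (2 * max ‖x‖ 1) ^ m * ((max ‖a‖ β) ^ m)⁻¹ := by
      rw [← div_eq_mul_inv, le_div_iff₀ (by positivity), inv_mul_eq_div,
        div_le_iff₀ (by positivity)]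
      linarith [hpow]
    have hef : (0:ℝ) ≤ Real.exp (-α * ‖x‖ ^ 2) * f x := by
      exact mul_nonneg (Real.exp_pos _).le (hf0 x)
    calc Real.exp (-α * ‖x‖ ^ 2) * f x * ((max ‖x + a‖ β) ^ m)⁻¹
        ≤ Real.exp (-α * ‖x‖ ^ 2) * f x * ((2 * max ‖x‖ 1) ^ m * ((max ‖a‖ β) ^ m)⁻¹) :=
          mul_le_mul_of_nonneg_left hinv hef
      _ = (2 ^ m * ((max ‖a‖ β) ^ m)⁻¹) *
          (Real.exp (-α * ‖x‖ ^ 2) * f x * (max ‖x‖ 1) ^ m) := by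
          rw [mul_pow]; ring
  have hle : (∫ x, Real.exp (-α * ‖x‖ ^ 2) * f x * ((max ‖x + a‖ β) ^ m)⁻¹)
      ≤ ∫ x, (2 ^ m * ((max ‖a‖ β) ^ m)⁻¹) *
          (Real.exp (-α * ‖x‖ ^ 2) * f x * (max ‖x‖ 1) ^ m) := by
    apply integral_mono_of_nonneg
    · filter_upwards with x
      have hmxa : (0:ℝ) < max ‖x + a‖ β := lt_of_lt_of_le hb0 (le_max_right _ _)
      have := hf0 x
      positivity
    · exact hI.const_mul _
    · filter_upwards with x using hbound x
  calc (∫ x, Real.exp (-α * ‖x‖ ^ 2) * f x * ((max ‖x + a‖ β) ^ m)⁻¹)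
      ≤ ∫ x, (2 ^ m * ((max ‖a‖ β) ^ m)⁻¹) *
          (Real.exp (-α * ‖x‖ ^ 2) * f x * (max ‖x‖ 1) ^ m) := hle
    _ = (2 ^ m * ((max ‖a‖ β) ^ m)⁻¹) * I := integral_const_mul _ _
    _ = 2 ^ m * I * ((max ‖a‖ β) ^ m)⁻¹ := by ring
end

section
/- Van der Corput type consequence: for ν > 1 and real x ≠ 0 and real P, the oscillatory integral satisfies |∫₀^P exp(−i·x·sgn(τ)·|τ|^ν) dτ| ≤ 4·|x|^{−1/ν}. -/
open MeasureTheory intervalIntegral Complex Real Set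

private lemma interval_integral_conj (f : ℝ → ℂ) (a b : ℝ) :
    ∫ x in a..b, (starRingEnd ℂ) (f x) = (starRingEnd ℂ) (∫ x in a..b, f x) := by
  simp [intervalIntegral, integral_conj, map_sub]

private lemma cont_exp (ν : ℝ) (hν : 1 < ν) :
    Continuous fun t : ℝ => Complex.exp (-Complex.I * ((t ^ ν : ℝ) : ℂ)) := by
  have h1 : Continuous fun t : ℝ => t ^ ν := by
    apply continuous_iff_continuousAt.2
    intro t
    exact Real.continuousAt_rpow_const t ν (Or.inr (by linarith))
  continuity

/-- Van der Corput bound on `[1, Q]`. -/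
private lemma core_tail (ν : ℝ) (hν : 1 < ν) (Q : ℝ) (hQ : 1 ≤ Q) :
    ‖∫ t in (1:ℝ)..Q, Complex.exp (-Complex.I * ((t ^ ν : ℝ) : ℂ))‖ ≤ 3 / ν := by
  have hν0 : (0:ℝ) < ν := by linarith
  have hνC : (ν : ℂ) ≠ 0 := by exact_mod_cast hν0.ne'
  set u : ℝ → ℂ := fun t => (Complex.I / ν) * ((t ^ (1 - ν) : ℝ) : ℂ) with hu_def
  set v : ℝ → ℂ := fun t => Complex.exp (-Complex.I * ((t ^ ν : ℝ) : ℂ)) with hv_def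
  set u' : ℝ → ℂ := fun t => (Complex.I / ν) * (((1 - ν) * t ^ (-ν) : ℝ) : ℂ) with hu'_def
  set v' : ℝ → ℂ := fun t =>
    Complex.exp (-Complex.I * ((t ^ ν : ℝ) : ℂ)) * (-Complex.I * ((ν * t ^ (ν - 1) : ℝ) : ℂ))
    with hv'_def
  have hIcc : uIcc (1:ℝ) Q = Icc 1 Q := uIcc_of_le hQ
  have hpos : ∀ t ∈ uIcc (1:ℝ) Q, (0:ℝ) < t := by
    intro t ht
    rw [hIcc] at ht
    linarith [ht.1]
  have hdu : ∀ t ∈ uIcc (1:ℝ) Q, HasDerivAt u (u' t) t := by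
    intro t ht
    have h1 : HasDerivAt (fun s : ℝ => s ^ (1 - ν)) ((1 - ν) * t ^ (1 - ν - 1)) t :=
      Real.hasDerivAt_rpow_const (Or.inl (hpos t ht).ne')
    have h2 : (1 - ν - 1 : ℝ) = -ν := by ring
    rw [h2] at h1
    exact (h1.ofReal_comp).const_mul _
  have hdv : ∀ t ∈ uIcc (1:ℝ) Q, HasDerivAt v (v' t) t := by
    intro t ht
    have h1 : HasDerivAt (fun s : ℝ => s ^ ν) (ν * t ^ (ν - 1)) t :=
      Real.hasDerivAt_rpow_const (Or.inl (hpos t ht).ne')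
    have h2 : HasDerivAt (fun s : ℝ => -Complex.I * ((s ^ ν : ℝ) : ℂ))
        (-Complex.I * ((ν * t ^ (ν - 1) : ℝ) : ℂ)) t := (h1.ofReal_comp).const_mul _
    exact h2.cexp
  have cont_on : ∀ c : ℝ, ContinuousOn (fun t : ℝ => t ^ c) (uIcc (1:ℝ) Q) := by
    intro c t ht
    exact (Real.continuousAt_rpow_const t c (Or.inl (hpos t ht).ne')).continuousWithinAt
  have hiu' : IntervalIntegrable u' volume 1 Q := by
    apply ContinuousOn.intervalIntegrable
    exact continuousOn_const.mul
      (Complex.continuous_ofReal.comp_continuousOn (continuousOn_const.mul (cont_on (-ν))))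
  have hiv' : IntervalIntegrable v' volume 1 Q := by
    apply ContinuousOn.intervalIntegrable
    apply ContinuousOn.mul
    · exact (cont_exp ν hν).continuousOn
    · exact continuousOn_const.mul
        (Complex.continuous_ofReal.comp_continuousOn (continuousOn_const.mul (cont_on (ν - 1))))
  have key : ∫ t in (1:ℝ)..Q, Complex.exp (-Complex.I * ((t ^ ν : ℝ) : ℂ))
      = ∫ t in (1:ℝ)..Q, u t * v' t := by
    apply intervalIntegral.integral_congr
    intro t ht
    have htpos := hpos t ht
    simp only [hu_def, hv'_def]
    have hne : ((t:ℝ) ^ (ν - 1) : ℝ) * (t ^ (1 - ν)) = 1 := by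
      rw [← Real.rpow_add htpos]
      norm_num
    have : (Complex.I / ν) * ((t ^ (1 - ν) : ℝ) : ℂ) *
        (Complex.exp (-Complex.I * ((t ^ ν : ℝ) : ℂ)) * (-Complex.I * ((ν * t ^ (ν - 1) : ℝ) : ℂ)))
        = Complex.exp (-Complex.I * ((t ^ ν : ℝ) : ℂ)) *
          ((Complex.I * -Complex.I) * (ν / ν) * ((t ^ (ν - 1) * t ^ (1 - ν) : ℝ) : ℂ)) := by
      push_cast
      ring
    rw [this, hne, div_self hνC]
    simp
  rw [key, intervalIntegral.integral_mul_deriv_eq_deriv_mul hdu hdv hiu' hiv']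
  have hnu : ∀ t : ℝ, 0 < t → ‖u t‖ = (1 / ν) * t ^ (1 - ν) := by
    intro t ht
    simp only [hu_def, norm_mul, norm_div, Complex.norm_I]
    rw [Complex.norm_real, Complex.norm_real]
    rw [Real.norm_of_nonneg (Real.rpow_nonneg ht.le _), Real.norm_of_nonneg hν0.le]
  have hnv : ∀ t : ℝ, ‖v t‖ = 1 := by
    intro t
    simp only [hv_def, Complex.norm_exp]
    norm_num [Complex.mul_re]
  have hQ1 : Q ^ (1 - ν) ≤ 1 := by
    apply Real.rpow_le_one_of_one_le_of_nonpos hQ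
    linarith
  have h1 : ‖u Q * v Q‖ ≤ 1 / ν := by
    rw [norm_mul, hnu Q (by linarith), hnv]
    rw [mul_one]
    calc 1 / ν * Q ^ (1 - ν) ≤ 1 / ν * 1 := by
          apply mul_le_mul_of_nonneg_left hQ1 (by positivity)
      _ = 1 / ν := by ring
  have h2 : ‖u 1 * v 1‖ = 1 / ν := by
    rw [norm_mul, hnu 1 one_pos, hnv, Real.one_rpow]
    ring
  have hnu' : ∀ t : ℝ, 0 < t → ‖u' t‖ = (ν - 1) / ν * t ^ (-ν) := by
    intro t htpos
    simp only [hu'_def, norm_mul, norm_div, Complex.norm_I, Complex.norm_real,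
      Real.norm_eq_abs, abs_mul, one_div]
    rw [_root_.abs_of_nonneg hν0.le, _root_.abs_of_nonpos (by linarith : (1:ℝ) - ν ≤ 0),
      _root_.abs_of_nonneg (Real.rpow_nonneg htpos.le _)]
    ring
  have hν1 : ν - 1 ≠ 0 := ne_of_gt (by linarith)
  have h3 : ‖∫ t in (1:ℝ)..Q, u' t * v t‖ ≤ 1 / ν := by
    have hcuv : ContinuousOn (fun t => u' t * v t) (uIcc (1:ℝ) Q) := by
      apply ContinuousOn.mul
      · exact continuousOn_const.mul
          (Complex.continuous_ofReal.comp_continuousOn (continuousOn_const.mul (cont_on (-ν))))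
      · exact (cont_exp ν hν).continuousOn
    have hgint : IntervalIntegrable (fun t : ℝ => ((ν - 1) / ν) * t ^ (-ν)) volume 1 Q := by
      apply ContinuousOn.intervalIntegrable
      exact continuousOn_const.mul (cont_on (-ν))
    have step1 : ‖∫ t in (1:ℝ)..Q, u' t * v t‖ ≤ ∫ t in (1:ℝ)..Q, ‖u' t * v t‖ :=
      intervalIntegral.norm_integral_le_integral_norm hQ
    have step2 : (∫ t in (1:ℝ)..Q, ‖u' t * v t‖)
        ≤ ∫ t in (1:ℝ)..Q, ((ν - 1) / ν) * t ^ (-ν) := by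
      apply intervalIntegral.integral_mono_on hQ
      · exact hcuv.norm.intervalIntegrable
      · exact hgint
      · intro t ht
        have htpos : (0:ℝ) < t := by linarith [ht.1]
        rw [norm_mul, hnv, mul_one, hnu' t htpos]
    have step3 : (∫ t in (1:ℝ)..Q, ((ν - 1) / ν) * t ^ (-ν)) ≤ 1 / ν := by
      rw [intervalIntegral.integral_const_mul]
      rw [integral_rpow (Or.inr ⟨by linarith, by rw [uIcc_of_le hQ]; intro h; linarith [h.1]⟩)]
      have hval : (Q ^ (-ν + 1) - (1:ℝ) ^ (-ν + 1)) / (-ν + 1) = (1 - Q ^ (1 - ν)) / (ν - 1) := by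
        rw [Real.one_rpow]
        rw [show (-ν + 1 : ℝ) = 1 - ν by ring]
        rw [div_eq_div_iff (by linarith) (by linarith)]
        ring
      rw [hval]
      have hQnn : 0 ≤ Q ^ (1 - ν) := Real.rpow_nonneg (by linarith) _
      calc (ν - 1) / ν * ((1 - Q ^ (1 - ν)) / (ν - 1))
          = (1 - Q ^ (1 - ν)) / ν := by
            field_simp
        _ ≤ 1 / ν := by
            gcongr
            linarith
    exact step1.trans (step2.trans step3)
  calc ‖u Q * v Q - u 1 * v 1 - ∫ t in (1:ℝ)..Q, u' t * v t‖
      ≤ ‖u Q * v Q - u 1 * v 1‖ + ‖∫ t in (1:ℝ)..Q, u' t * v t‖ := norm_sub_le _ _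
    _ ≤ (‖u Q * v Q‖ + ‖u 1 * v 1‖) + ‖∫ t in (1:ℝ)..Q, u' t * v t‖ := by
        gcongr; exact norm_sub_le _ _
    _ ≤ (1 / ν + 1 / ν) + 1 / ν := add_le_add (add_le_add h1 h2.le) h3
    _ = 3 / ν := by ring

private lemma norm_exp_one (r : ℝ) : ‖Complex.exp (-Complex.I * (r : ℂ))‖ = 1 := by
  simp only [Complex.norm_exp]
  norm_num [Complex.mul_re]

/-- Van der Corput bound on `[0, Q]`, `Q ≥ 0`. -/
private lemma core (ν : ℝ) (hν : 1 < ν) (Q : ℝ) (hQ : 0 ≤ Q) :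
    ‖∫ t in (0:ℝ)..Q, Complex.exp (-Complex.I * ((t ^ ν : ℝ) : ℂ))‖ ≤ 4 := by
  have hcont := cont_exp ν hν
  rcases le_or_gt Q 1 with h | h
  · have hb : ∀ t ∈ Set.uIoc (0:ℝ) Q,
        ‖Complex.exp (-Complex.I * ((t ^ ν : ℝ) : ℂ))‖ ≤ 1 :=
      fun t _ => le_of_eq (norm_exp_one _)
    calc ‖∫ t in (0:ℝ)..Q, Complex.exp (-Complex.I * ((t ^ ν : ℝ) : ℂ))‖
        ≤ 1 * |Q - 0| := intervalIntegral.norm_integral_le_of_norm_le_const hb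
      _ ≤ 4 := by rw [sub_zero, _root_.abs_of_nonneg hQ]; linarith
  · have hsplit := intervalIntegral.integral_add_adjacent_intervals
      (a := (0:ℝ)) (b := 1) (c := Q) (μ := volume)
      (hcont.intervalIntegrable _ _) (hcont.intervalIntegrable _ _)
    rw [← hsplit]
    have hb : ∀ t ∈ Set.uIoc (0:ℝ) 1,
        ‖Complex.exp (-Complex.I * ((t ^ ν : ℝ) : ℂ))‖ ≤ 1 :=
      fun t _ => le_of_eq (norm_exp_one _)
    have h1 : ‖∫ t in (0:ℝ)..1, Complex.exp (-Complex.I * ((t ^ ν : ℝ) : ℂ))‖ ≤ 1 := by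
      calc ‖∫ t in (0:ℝ)..1, Complex.exp (-Complex.I * ((t ^ ν : ℝ) : ℂ))‖
          ≤ 1 * |1 - 0| := intervalIntegral.norm_integral_le_of_norm_le_const hb
        _ = 1 := by norm_num
    have h2 := core_tail ν hν Q h.le
    have h3 : 3 / ν ≤ 3 := by
      rw [div_le_iff₀ (by linarith)]
      nlinarith
    calc ‖(∫ t in (0:ℝ)..1, Complex.exp (-Complex.I * ((t ^ ν : ℝ) : ℂ)))
          + ∫ t in (1:ℝ)..Q, Complex.exp (-Complex.I * ((t ^ ν : ℝ) : ℂ))‖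
        ≤ ‖∫ t in (0:ℝ)..1, Complex.exp (-Complex.I * ((t ^ ν : ℝ) : ℂ))‖
          + ‖∫ t in (1:ℝ)..Q, Complex.exp (-Complex.I * ((t ^ ν : ℝ) : ℂ))‖ := norm_add_le _ _
      _ ≤ 1 + 3 / ν := add_le_add h1 h2
      _ ≤ 4 := by linarith

private lemma pos_case (ν x P : ℝ) (hν : 1 < ν) (hx : 0 < x) (hP : 0 ≤ P) :
    ‖∫ τ in (0:ℝ)..P, Complex.exp (-Complex.I * ((x * Real.sign τ * |τ| ^ ν : ℝ) : ℂ))‖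
      ≤ 4 * x ^ (-1 / ν) := by
  have hν0 : (0:ℝ) < ν := by linarith
  set c := x ^ (1 / ν) with hc
  have hc0 : 0 < c := Real.rpow_pos_of_pos hx _
  have hcν : c ^ ν = x := by
    rw [hc, ← Real.rpow_mul hx.le, one_div, inv_mul_cancel₀ hν0.ne', Real.rpow_one]
  have hstep : EqOn (fun τ : ℝ => Complex.exp (-Complex.I * ((x * Real.sign τ * |τ| ^ ν : ℝ) : ℂ)))
      (fun τ : ℝ => Complex.exp (-Complex.I * (((c * τ) ^ ν : ℝ) : ℂ))) (uIcc (0:ℝ) P) := by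
    intro τ hτ
    rw [uIcc_of_le hP] at hτ
    rcases eq_or_lt_of_le hτ.1 with h0 | h0
    · simp only [← h0, Real.sign_zero, mul_zero, zero_mul, mul_comm]
      rw [Real.zero_rpow hν0.ne']
    · simp only
      congr 3
      rw [Real.sign_of_pos h0, abs_of_pos h0, Real.mul_rpow hc0.le h0.le, hcν]
      ring
  rw [intervalIntegral.integral_congr hstep]
  have hcomp := intervalIntegral.integral_comp_mul_left
    (a := (0:ℝ)) (b := P) (c := c)
    (fun t : ℝ => Complex.exp (-Complex.I * ((t ^ ν : ℝ) : ℂ))) hc0.ne'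
  rw [hcomp, mul_zero, norm_smul, Real.norm_eq_abs, abs_inv, abs_of_pos hc0]
  have hbound := core ν hν (c * P) (by positivity)
  have hcinv : c⁻¹ = x ^ (-1 / ν) := by
    rw [hc, ← Real.rpow_neg hx.le, neg_div]
  calc c⁻¹ * ‖∫ t in (0:ℝ)..(c * P), Complex.exp (-Complex.I * ((t ^ ν : ℝ) : ℂ))‖
      ≤ c⁻¹ * 4 := by
        apply mul_le_mul_of_nonneg_left hbound (by positivity)
    _ = 4 * x ^ (-1 / ν) := by rw [hcinv]; ring

private lemma conj_integrand (ν x τ : ℝ) :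
    Complex.exp (-Complex.I * (((-x) * Real.sign τ * |τ| ^ ν : ℝ) : ℂ))
      = (starRingEnd ℂ) (Complex.exp (-Complex.I * ((x * Real.sign τ * |τ| ^ ν : ℝ) : ℂ))) := by
  rw [← Complex.exp_conj]
  congr 1
  simp only [map_mul, map_neg, Complex.conj_I, Complex.conj_ofReal]
  push_cast
  ring

private lemma norm_neg_x (ν x P : ℝ) :
    ‖∫ τ in (0:ℝ)..P, Complex.exp (-Complex.I * (((-x) * Real.sign τ * |τ| ^ ν : ℝ) : ℂ))‖
      = ‖∫ τ in (0:ℝ)..P, Complex.exp (-Complex.I * ((x * Real.sign τ * |τ| ^ ν : ℝ) : ℂ))‖ := by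
  simp_rw [conj_integrand ν x]
  rw [interval_integral_conj]
  exact RCLike.norm_conj _

private lemma norm_neg_P (ν x P : ℝ) :
    ‖∫ τ in (0:ℝ)..(-P), Complex.exp (-Complex.I * ((x * Real.sign τ * |τ| ^ ν : ℝ) : ℂ))‖
      = ‖∫ τ in (0:ℝ)..P, Complex.exp (-Complex.I * ((x * Real.sign τ * |τ| ^ ν : ℝ) : ℂ))‖ := by
  have h1 : ∫ τ in (0:ℝ)..P, Complex.exp (-Complex.I * (((-x) * Real.sign τ * |τ| ^ ν : ℝ) : ℂ))
      = ∫ τ in (-P:ℝ)..(-0:ℝ), Complex.exp (-Complex.I * ((x * Real.sign τ * |τ| ^ ν : ℝ) : ℂ)) := by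
    rw [← intervalIntegral.integral_comp_neg
      (fun τ : ℝ => Complex.exp (-Complex.I * ((x * Real.sign τ * |τ| ^ ν : ℝ) : ℂ)))]
    apply intervalIntegral.integral_congr
    intro τ _
    simp only
    congr 3
    rw [Real.sign_neg, abs_neg]
    ring
  have h2 : ∫ τ in (0:ℝ)..(-P), Complex.exp (-Complex.I * ((x * Real.sign τ * |τ| ^ ν : ℝ) : ℂ))
      = -∫ τ in (-P:ℝ)..(0:ℝ), Complex.exp (-Complex.I * ((x * Real.sign τ * |τ| ^ ν : ℝ) : ℂ)) :=
    intervalIntegral.integral_symm _ _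
  rw [h2, norm_neg]
  rw [show (0:ℝ) = -0 by norm_num, ← h1, norm_neg_x]
  norm_num

private lemma main_nonneg (ν x P : ℝ) (hν : 1 < ν) (hx : x ≠ 0) (hP : 0 ≤ P) :
    ‖∫ τ in (0:ℝ)..P, Complex.exp (-Complex.I * ((x * Real.sign τ * |τ| ^ ν : ℝ) : ℂ))‖
      ≤ 4 * |x| ^ (-1 / ν) := by
  rcases hx.lt_or_gt with h | h
  · have h' : 0 < -x := by linarith
    rw [show x = -(-x) by ring, norm_neg_x, neg_neg, abs_of_neg h]
    exact pos_case ν (-x) P hν h' hP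
  · rw [abs_of_pos h]
    exact pos_case ν x P hν h hP

/-- Van der Corput type consequence: for `ν > 1`, real `x ≠ 0` and real `P`, the oscillatory
integral satisfies `|∫₀^P exp(−i x sgn(τ) |τ|^ν) dτ| ≤ 4 |x|^{−1/ν}`, uniformly in `P`. -/
theorem van_der_corput_consequence (ν x P : ℝ) (hν : 1 < ν) (hx : x ≠ 0) :
    ‖∫ τ in (0:ℝ)..P, Complex.exp (-Complex.I * ((x * Real.sign τ * |τ| ^ ν : ℝ) : ℂ))‖
      ≤ 4 * |x| ^ (-1 / ν) := by
  rcases le_or_gt 0 P with hP | hP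
  · exact main_nonneg ν x P hν hx hP
  · rw [show P = -(-P) by ring, norm_neg_P]
    exact main_nonneg ν x (-P) hν hx (by linarith)
end
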